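/- Let $\rho$ be a compactly supported bounded probability density on $\mathbb{R}$ which is not almost everywhere zero. Then there is a constant $C_2 < \infty$ such that for all $\eta, \beta \in \mathbb{C}$, the decoupling bound $\int \frac{\rho(v)}{|v-\beta|^s}\,dv \le C_2 \int \frac{|v-\eta|^s}{|v-\beta|^s}\rho(v)\,dv$ holds, where $s \in (0,1)$ is fixed. -/

import Mathlib

open MeasureTheory Set

lemma kernel_intOn {s : ℝ} (hs0 : 0 < s) (hs1 : s < 1) (b : ℝ) :
    IntegrableOn (fun v => |v - b| ^ (-s)) (Set.Icc (b-1) (b+1)) := by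
  have hL : IntegrableOn (fun v => |v - b| ^ (-s)) (Set.Ioc (b-1) b) := by
    have h0 : IntervalIntegrable (fun x : ℝ => x ^ (-s)) volume 0 1 :=
      intervalIntegral.intervalIntegrable_rpow' (by linarith)
    have h1 := h0.comp_sub_left b
    rw [intervalIntegrable_iff, show b - 0 = b by ring, Set.uIoc_comm,
      uIoc_of_le (by linarith : b - 1 ≤ b)] at h1
    refine h1.congr_fun ?_ measurableSet_Ioc
    intro x hx
    simp only
    rw [abs_of_nonpos (by linarith [hx.2] : x - b ≤ 0), neg_sub]
  have hR : IntegrableOn (fun v => |v - b| ^ (-s)) (Set.Ioc b (b+1)) := by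
    have h0 : IntervalIntegrable (fun x : ℝ => x ^ (-s)) volume 0 1 :=
      intervalIntegral.intervalIntegrable_rpow' (by linarith)
    have h1 := h0.comp_sub_right b
    rw [intervalIntegrable_iff, show (0:ℝ) + b = b by ring, show (1:ℝ) + b = b + 1 by ring,
      uIoc_of_le (by linarith : b ≤ b + 1)] at h1
    refine h1.congr_fun ?_ measurableSet_Ioc
    intro x hx
    simp only
    rw [abs_of_nonneg (by linarith [hx.1] : (0:ℝ) ≤ x - b)]
  have : IntegrableOn (fun v => |v - b| ^ (-s)) (Set.Ioc (b-1) (b+1)) := by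
    have := hL.union hR
    rwa [Set.Ioc_union_Ioc_eq_Ioc (by linarith) (by linarith)] at this
  rwa [integrableOn_Icc_iff_integrableOn_Ioc]

lemma kernel_bound {s : ℝ} (hs0 : 0 < s) (hs1 : s < 1) (b : ℝ) :
    ∫ v in Set.Icc (b-1) (b+1), |v - b| ^ (-s) ≤ 2 / (1 - s) := by
  have key : ∫ x in (0:ℝ)..1, x ^ (-s) = 1 / (1 - s) := by
    rw [integral_rpow (Or.inl (by linarith))]
    rw [Real.one_rpow, Real.zero_rpow (by linarith : -s + 1 ≠ 0)]
    ring_nf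
  have hIL : ∫ v in Set.Ioc (b-1) b, |v - b| ^ (-s) = 1 / (1-s) := by
    have e1 : ∫ v in Set.Ioc (b-1) b, |v - b| ^ (-s)
        = ∫ v in Set.Ioc (b-1) b, (b - v) ^ (-s) := by
      refine setIntegral_congr_fun measurableSet_Ioc fun x hx => ?_
      rw [abs_of_nonpos (by linarith [hx.2] : x - b ≤ 0), neg_sub]
    rw [e1, ← intervalIntegral.integral_of_le (by linarith : b - 1 ≤ b),
      intervalIntegral.integral_comp_sub_left (fun x : ℝ => x ^ (-s)) b]
    simpa using key
  have hIR : ∫ v in Set.Ioc b (b+1), |v - b| ^ (-s) = 1 / (1-s) := by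
    have e1 : ∫ v in Set.Ioc b (b+1), |v - b| ^ (-s)
        = ∫ v in Set.Ioc b (b+1), (v - b) ^ (-s) := by
      refine setIntegral_congr_fun measurableSet_Ioc fun x hx => ?_
      rw [abs_of_nonneg (by linarith [hx.1] : (0:ℝ) ≤ x - b)]
    rw [e1, ← intervalIntegral.integral_of_le (by linarith : b ≤ b + 1),
      intervalIntegral.integral_comp_sub_right (fun x : ℝ => x ^ (-s)) b]
    simpa using key
  have hsplit : ∫ v in Set.Icc (b-1) (b+1), |v - b| ^ (-s)
      = (∫ v in Set.Ioc (b-1) b, |v - b| ^ (-s)) + ∫ v in Set.Ioc b (b+1), |v - b| ^ (-s) := by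
    rw [integral_Icc_eq_integral_Ioc, ← Set.Ioc_union_Ioc_eq_Ioc (by linarith : b-1 ≤ b) (by linarith : b ≤ b+1)]
    refine setIntegral_union (Set.Ioc_disjoint_Ioc_of_le le_rfl) measurableSet_Ioc ?_ ?_
    · have := kernel_intOn hs0 hs1 b
      exact this.mono_set (by intro x hx; exact ⟨by linarith [hx.1], by linarith [hx.2]⟩)
    · have := kernel_intOn hs0 hs1 b
      exact this.mono_set (by intro x hx; exact ⟨by linarith [hx.1], by linarith [hx.2]⟩)
  rw [hsplit, hIL, hIR, ← add_div]
  norm_num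


/-- the decoupling lemma (Lemma 2 / (eq:decoupling)). -/
theorem stmt_3 (s : ℝ) (hs : s ∈ Set.Ioo (0 : ℝ) 1) (ρ : ℝ → ℝ) (hmeas : Measurable ρ)
    (hnonneg : ∀ v, 0 ≤ ρ v) (hbdd : ∃ M, ∀ v, ρ v ≤ M) (hcomp : HasCompactSupport ρ)
    (hprob : ∫ v, ρ v = 1) :
    ∃ C : ℝ, ∀ η β : ℂ,
      ∫ v : ℝ, ρ v / ‖(v : ℂ) - β‖ ^ s
        ≤ C * ∫ v : ℝ, ‖(v : ℂ) - η‖ ^ s / ‖(v : ℂ) - β‖ ^ s * ρ v := by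
  obtain ⟨hs0, hs1⟩ := hs
  obtain ⟨M0, hM0⟩ := hbdd
  set M : ℝ := max M0 1 with hMdef
  have hM : ∀ v, ρ v ≤ M := fun v => le_trans (hM0 v) (le_max_left _ _)
  have hM1 : (1:ℝ) ≤ M := le_max_right _ _
  have hMpos : (0:ℝ) < M := lt_of_lt_of_le one_pos hM1
  -- support radius
  obtain ⟨R0, hR0⟩ : ∃ R0, tsupport ρ ⊆ Metric.closedBall 0 R0 :=
    hcomp.isBounded.subset_closedBall 0
  set R : ℝ := max R0 1 with hRdef
  have hR1 : (1:ℝ) ≤ R := le_max_right _ _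
  have hRpos : (0:ℝ) < R := lt_of_lt_of_le one_pos hR1
  have hsupp : ∀ v : ℝ, R < |v| → ρ v = 0 := by
    intro v hv
    by_contra h
    have : v ∈ tsupport ρ := subset_tsupport ρ (by simpa using h)
    have := hR0 this
    rw [Metric.mem_closedBall, Real.dist_eq, sub_zero] at this
    have : |v| ≤ R := le_trans this (le_max_left _ _)
    linarith
  set δ : ℝ := 1 / (4 * M) with hδdef
  have hδpos : 0 < δ := by positivity
  have hδ1 : δ ≤ 1 := by
    rw [hδdef, div_le_one (by positivity)]; linarith
  -- basic abs facts
  have habs_lower : ∀ (v : ℝ) (β : ℂ), |v - β.re| ≤ ‖(v:ℂ) - β‖ := by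
    intro v β
    have := Complex.abs_re_le_norm ((v:ℂ) - β)
    simpa using this
  have habs_upper : ∀ (v : ℝ) (β : ℂ), ‖(v:ℂ) - β‖ ≤ |v| + ‖β‖ := by
    intro v β
    calc ‖(v:ℂ) - β‖ ≤ ‖(v:ℂ)‖ + ‖β‖ := by
          simpa using norm_sub_le (v:ℂ) β
      _ = |v| + ‖β‖ := by rw [Complex.norm_real, Real.norm_eq_abs]
  -- integrability of ρ
  have hρint : Integrable ρ := by
    have hind : Integrable (fun v => (Set.Icc (-R) R).indicator (fun _ => M) v) := by
      rw [integrable_indicator_iff measurableSet_Icc]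
      exact integrableOn_const measure_Icc_lt_top.ne
    refine hind.mono' hmeas.aestronglyMeasurable (Filter.Eventually.of_forall fun v => ?_)
    rw [Real.norm_eq_abs, abs_of_nonneg (hnonneg v)]
    by_cases hv : |v| ≤ R
    · rw [Set.indicator_of_mem (by constructor <;> [linarith [neg_abs_le v]; linarith [le_abs_self v]])]
      exact hM v
    · rw [hsupp v (not_le.1 hv)]
      exact Set.indicator_nonneg (fun _ _ => hMpos.le) v
  -- integrability of the LHS integrand
  have hFmeas : ∀ β : ℂ, Measurable (fun v : ℝ => ρ v / (‖(v:ℂ) - β‖) ^ s) := by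
    intro β
    have m1 : Continuous fun v : ℝ => ‖(v:ℂ) - β‖ :=
      continuous_norm.comp (Complex.continuous_ofReal.sub continuous_const)
    exact hmeas.div ((Real.continuous_rpow_const hs0.le |>.comp m1).measurable)
  have hae_ne : ∀ b : ℝ, ∀ᵐ v : ℝ, v ≠ b := by
    intro b
    rw [MeasureTheory.ae_iff]
    simpa using Real.volume_singleton (a := b)
  set A : ℝ := 2 * M / (1 - s) + 1 with hAdef
  have h1s : (0:ℝ) < 1 - s := by linarith
  have hApos : 0 < A := by positivity
  have key : ∀ β : ℂ, Integrable (fun v : ℝ => ρ v / (‖(v:ℂ) - β‖) ^ s) ∧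
      (∫ v : ℝ, ρ v / (‖(v:ℂ) - β‖) ^ s) ≤ A := by
    intro β
    set b := β.re with hbdef
    set ψ : ℝ → ℝ := fun v => M * ((Set.Icc (b-1) (b+1)).indicator
        (fun v => |v - b| ^ (-s)) v) + ρ v with hψdef
    have hψ1 : Integrable (fun v => M * ((Set.Icc (b-1) (b+1)).indicator
        (fun v => |v - b| ^ (-s)) v)) := by
      refine Integrable.const_mul ?_ M
      rw [integrable_indicator_iff measurableSet_Icc]
      exact kernel_intOn hs0 hs1 b
    have hψint : Integrable ψ := hψ1.add hρint
    have hbound : ∀ᵐ v : ℝ, ρ v / (‖(v:ℂ) - β‖) ^ s ≤ ψ v := by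
      filter_upwards [hae_ne b] with v hv
      have hvb : 0 < |v - b| := abs_pos.2 (sub_ne_zero.2 hv)
      have hlow : |v - b| ≤ ‖(v:ℂ) - β‖ := habs_lower v β
      by_cases hcase : |v - b| ≤ 1
      · rw [hψdef]
        simp only
        rw [Set.indicator_of_mem (Set.mem_Icc.2
          ⟨by linarith [neg_abs_le (v-b)], by linarith [le_abs_self (v-b)]⟩)]
        have h1 : |v - b| ^ s ≤ (‖(v:ℂ) - β‖) ^ s :=
          Real.rpow_le_rpow hvb.le hlow hs0.le
        have h2 : ρ v / (‖(v:ℂ) - β‖) ^ s ≤ M / |v - b| ^ s :=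
          div_le_div₀ (by positivity) (hM v) (by positivity) h1
        calc ρ v / (‖(v:ℂ) - β‖) ^ s ≤ M / |v - b| ^ s := h2
          _ = M * |v - b| ^ (-s) := by rw [Real.rpow_neg hvb.le, div_eq_mul_inv]
          _ ≤ M * |v - b| ^ (-s) + ρ v := le_add_of_nonneg_right (hnonneg v)
      · rw [hψdef]
        simp only
        rw [Set.indicator_of_notMem (by
          intro hmem; apply hcase; rw [abs_le]
          exact ⟨by linarith [hmem.1], by linarith [hmem.2]⟩)]
        have h1 : (1:ℝ) ≤ (‖(v:ℂ) - β‖) ^ s :=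
          Real.one_le_rpow (le_trans (not_le.1 hcase).le hlow) hs0.le
        calc ρ v / (‖(v:ℂ) - β‖) ^ s ≤ ρ v := div_le_self (hnonneg v) h1
          _ ≤ M * 0 + ρ v := by simp
    have hnormbound : ∀ᵐ v : ℝ, ‖ρ v / (‖(v:ℂ) - β‖) ^ s‖ ≤ ψ v := by
      filter_upwards [hbound] with v hv
      rwa [Real.norm_eq_abs, abs_of_nonneg (div_nonneg (hnonneg v)
        (Real.rpow_nonneg (norm_nonneg _) s))]
    have hFint : Integrable (fun v : ℝ => ρ v / (‖(v:ℂ) - β‖) ^ s) :=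
      hψint.mono' (hFmeas β).aestronglyMeasurable hnormbound
    refine ⟨hFint, ?_⟩
    calc (∫ v : ℝ, ρ v / (‖(v:ℂ) - β‖) ^ s) ≤ ∫ v, ψ v :=
          integral_mono_ae hFint hψint hbound
      _ = M * (∫ v in Set.Icc (b-1) (b+1), |v - b| ^ (-s)) + 1 := by
          rw [hψdef]
          rw [integral_add hψ1 hρint, integral_const_mul,
            integral_indicator measurableSet_Icc, hprob]
      _ ≤ M * (2 / (1-s)) + 1 := by
          have := kernel_bound hs0 hs1 b
          nlinarith
      _ = A := by rw [hAdef]; ring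
  have hF_int : ∀ β : ℂ, Integrable (fun v : ℝ => ρ v / (‖(v:ℂ) - β‖) ^ s) :=
    fun β => (key β).1
  have hFle : ∀ β : ℂ, (∫ v : ℝ, ρ v / (‖(v:ℂ) - β‖) ^ s) ≤ A :=
    fun β => (key β).2
  -- far field bound
  have hFfar : ∀ β : ℂ, 3*R ≤ ‖β‖ →
      (∫ v : ℝ, ρ v / (‖(v:ℂ) - β‖) ^ s) ≤ 2^s * (‖β‖ + R)^(-s) := by
    intro β hβ
    have hxpos : (0:ℝ) < ‖β‖ + R := by positivity
    have hpt : ∀ v : ℝ, ρ v / (‖(v:ℂ) - β‖) ^ s ≤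
        (2^s * (‖β‖ + R)^(-s)) * ρ v := by
      intro v
      by_cases hv : ρ v = 0
      · simp [hv, div_nonneg]
      · have hvR : |v| ≤ R := by
          by_contra h
          exact hv (hsupp v (not_le.1 h))
        have hlow : (‖β‖ + R)/2 ≤ ‖(v:ℂ) - β‖ := by
          have h1 : ‖β‖ - |v| ≤ ‖(v:ℂ) - β‖ := by
            have h2 : ‖(β : ℂ)‖ - ‖(v:ℂ)‖ ≤ ‖β - (v:ℂ)‖ := norm_sub_norm_le β (v:ℂ)
            rw [norm_sub_rev] at h2
            simpa [Complex.norm_real] using h2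
          linarith
        have hpow : ((‖β‖ + R)/2) ^ s ≤ (‖(v:ℂ) - β‖) ^ s :=
          Real.rpow_le_rpow (by positivity) hlow hs0.le
        calc ρ v / (‖(v:ℂ) - β‖) ^ s
            ≤ ρ v / ((‖β‖ + R)/2) ^ s :=
              div_le_div_of_nonneg_left (hnonneg v) (by positivity) hpow
          _ = (2^s * (‖β‖ + R)^(-s)) * ρ v := by
              rw [Real.div_rpow hxpos.le (by norm_num : (0:ℝ) ≤ 2), Real.rpow_neg hxpos.le]
              have h2s : (0:ℝ) < (2:ℝ)^s := Real.rpow_pos_of_pos two_pos s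
              have hxs : (0:ℝ) < (‖β‖ + R)^s := Real.rpow_pos_of_pos hxpos s
              field_simp
    calc (∫ v : ℝ, ρ v / (‖(v:ℂ) - β‖) ^ s)
        ≤ ∫ v : ℝ, (2^s * (‖β‖ + R)^(-s)) * ρ v :=
          integral_mono (hF_int β) (hρint.const_mul _) hpt
      _ = 2^s * (‖β‖ + R)^(-s) := by rw [integral_const_mul, hprob, mul_one]
  -- integrability of v ↦ |v-η|^s ρ v
  have hHmeas : ∀ η : ℂ, Measurable (fun v : ℝ => (‖(v:ℂ) - η‖) ^ s) := by
    intro η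
    have m1 : Continuous fun v : ℝ => ‖(v:ℂ) - η‖ :=
      continuous_norm.comp (Complex.continuous_ofReal.sub continuous_const)
    exact (Real.continuous_rpow_const hs0.le |>.comp m1).measurable
  have hHint : ∀ η : ℂ, Integrable (fun v : ℝ => (‖(v:ℂ) - η‖) ^ s * ρ v) := by
    intro η
    refine (hρint.const_mul ((R + ‖η‖)^s)).mono'
      ((hHmeas η).mul hmeas).aestronglyMeasurable (Filter.Eventually.of_forall fun v => ?_)
    rw [Real.norm_eq_abs, abs_of_nonneg (mul_nonneg (Real.rpow_nonneg (norm_nonneg _) s)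
      (hnonneg v))]
    by_cases hv : ρ v = 0
    · simp [hv]
    · have hvR : |v| ≤ R := by
        by_contra h
        exact hv (hsupp v (not_le.1 h))
      have h1 : ‖(v:ℂ) - η‖ ≤ R + ‖η‖ := by
        have := habs_upper v η; linarith
      exact mul_le_mul_of_nonneg_right
        (Real.rpow_le_rpow (norm_nonneg _) h1 hs0.le) (hnonneg v)
  -- lower bound on ∫ |v-η|^s ρ
  have hHlow : ∀ η : ℂ, δ^s/2 ≤ ∫ v : ℝ, (‖(v:ℂ) - η‖) ^ s * ρ v := by
    intro η
    set e := η.re with hedef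
    set S : Set ℝ := Set.Ioo (e-δ) (e+δ) with hSdef
    have hvolS : volume S = ENNReal.ofReal (2*δ) := by
      rw [hSdef, Real.volume_Ioo]
      ring_nf
    have hmass : ∫ v in S, ρ v ≤ 1/2 := by
      have h1 : ∫ v in S, ρ v ≤ ∫ _ in S, M :=
        setIntegral_mono_on hρint.integrableOn
          (integrableOn_const (by rw [hvolS]; exact ENNReal.ofReal_ne_top))
          measurableSet_Ioo (fun x _ => hM x)
      have h2 : ∫ _ in S, M = M * (2*δ) := by
        rw [setIntegral_const, measureReal_def, hvolS, ENNReal.toReal_ofReal (by positivity), smul_eq_mul]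
        ring
      have h3 : M * (2*δ) = 1/2 := by
        rw [hδdef]
        field_simp
        ring
      linarith
    have hSc : 1/2 ≤ ∫ v in Sᶜ, ρ v := by
      have h4 := integral_add_compl (measurableSet_Ioo (a := e-δ) (b := e+δ)) hρint
      rw [hprob] at h4
      have : S = Set.Ioo (e-δ) (e+δ) := hSdef
      rw [← this] at h4
      linarith
    have step1 : ∫ v in Sᶜ, δ^s * ρ v ≤ ∫ v in Sᶜ, (‖(v:ℂ) - η‖) ^ s * ρ v := by
      refine setIntegral_mono_on ((hρint.const_mul _).integrableOn)
        (hHint η).integrableOn measurableSet_Ioo.compl fun x hx => ?_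
      have hxe : δ ≤ |x - e| := by
        by_contra h
        apply hx
        rw [hSdef, Set.mem_Ioo]
        have := abs_lt.1 (not_le.1 h)
        constructor <;> linarith [this.1, this.2]
      have hxη : δ ≤ ‖(x:ℂ) - η‖ := le_trans hxe (habs_lower x η)
      exact mul_le_mul_of_nonneg_right (Real.rpow_le_rpow hδpos.le hxη hs0.le) (hnonneg x)
    calc δ^s/2 = δ^s * (1/2) := by ring
      _ ≤ δ^s * ∫ v in Sᶜ, ρ v := mul_le_mul_of_nonneg_left hSc (Real.rpow_nonneg hδpos.le s)
      _ = ∫ v in Sᶜ, δ^s * ρ v := (integral_const_mul _ _).symm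
      _ ≤ ∫ v in Sᶜ, (‖(v:ℂ) - η‖) ^ s * ρ v := step1
      _ ≤ ∫ v : ℝ, (‖(v:ℂ) - η‖) ^ s * ρ v :=
          setIntegral_le_integral (hHint η) (Filter.Eventually.of_forall fun v =>
            mul_nonneg (Real.rpow_nonneg (norm_nonneg _) s) (hnonneg v))
  -- integrability of the RHS integrand
  have hGint : ∀ η β : ℂ, Integrable (fun v : ℝ =>
      (‖(v:ℂ) - η‖) ^ s / (‖(v:ℂ) - β‖) ^ s * ρ v) := by
    intro η β
    set c : ℝ := (R + ‖η‖)^s with hcdef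
    have hc0 : 0 ≤ c := Real.rpow_nonneg (by positivity) s
    refine ((hF_int β).const_mul c).mono'
      (((hHmeas η).div (hHmeas β)).mul hmeas).aestronglyMeasurable
      (Filter.Eventually.of_forall fun v => ?_)
    rw [Real.norm_eq_abs, abs_of_nonneg (mul_nonneg (div_nonneg
      (Real.rpow_nonneg (norm_nonneg _) s)
      (Real.rpow_nonneg (norm_nonneg _) s)) (hnonneg v))]
    by_cases hv : ρ v = 0
    · simp [hv]
    · have hvR : |v| ≤ R := by
        by_contra h
        exact hv (hsupp v (not_le.1 h))
      have hnum : (‖(v:ℂ) - η‖) ^ s ≤ c := by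
        refine Real.rpow_le_rpow (norm_nonneg _) ?_ hs0.le
        have := habs_upper v η; linarith
      calc (‖(v:ℂ) - η‖) ^ s / (‖(v:ℂ) - β‖) ^ s * ρ v
          = (‖(v:ℂ) - η‖) ^ s * (ρ v / (‖(v:ℂ) - β‖) ^ s) := by
            ring
        _ ≤ c * (ρ v / (‖(v:ℂ) - β‖) ^ s) :=
            mul_le_mul_of_nonneg_right hnum
              (div_nonneg (hnonneg v) (Real.rpow_nonneg (norm_nonneg _) s))
  -- lower bound for RHS integral
  have hGlow : ∀ η β : ℂ, (‖β‖ + R)^(-s) *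
      (∫ v : ℝ, (‖(v:ℂ) - η‖) ^ s * ρ v) ≤
      ∫ v : ℝ, (‖(v:ℂ) - η‖) ^ s / (‖(v:ℂ) - β‖) ^ s * ρ v := by
    intro η β
    rw [← integral_const_mul]
    refine integral_mono_ae ((hHint η).const_mul _) (hGint η β) ?_
    filter_upwards [hae_ne β.re] with v hv
    by_cases hρv : ρ v = 0
    · simp [hρv]
    · have hvR : |v| ≤ R := by
        by_contra h
        exact hρv (hsupp v (not_le.1 h))
      have hXpos : 0 < ‖(v:ℂ) - β‖ :=
        lt_of_lt_of_le (abs_pos.2 (sub_ne_zero.2 hv)) (habs_lower v β)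
      have hXle : ‖(v:ℂ) - β‖ ≤ ‖β‖ + R := by
        have := habs_upper v β; linarith
      have h1 : (‖β‖ + R)^(-s) ≤ (‖(v:ℂ) - β‖)^(-s) :=
        Real.rpow_le_rpow_of_nonpos hXpos hXle (by linarith)
      calc (‖β‖ + R)^(-s) * ((‖(v:ℂ) - η‖) ^ s * ρ v)
          ≤ (‖(v:ℂ) - β‖)^(-s) * ((‖(v:ℂ) - η‖) ^ s * ρ v) :=
            mul_le_mul_of_nonneg_right h1 (mul_nonneg
              (Real.rpow_nonneg (norm_nonneg _) s) (hnonneg v))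
        _ = (‖(v:ℂ) - η‖) ^ s / (‖(v:ℂ) - β‖) ^ s * ρ v := by
            rw [Real.rpow_neg hXpos.le, div_eq_mul_inv]
            ring
  -- the combined upper bound with decay
  set B : ℝ := max (A * (4*R)^s) (2^s) with hBdef
  have hBpos : 0 < B := lt_of_lt_of_le (Real.rpow_pos_of_pos two_pos s) (le_max_right _ _)
  have hD : ∀ β : ℂ, (∫ v : ℝ, ρ v / (‖(v:ℂ) - β‖) ^ s) ≤
      B * (‖β‖ + R)^(-s) := by
    intro β
    have hxpos : (0:ℝ) < ‖β‖ + R := by positivity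
    rcases le_or_gt (‖β‖) (3*R) with hcase | hcase
    · have h1 : (4*R)^(-s) ≤ (‖β‖ + R)^(-s) :=
        Real.rpow_le_rpow_of_nonpos hxpos (by linarith) (by linarith)
      have h2 : A = (A * (4*R)^s) * (4*R)^(-s) := by
        rw [Real.rpow_neg (by positivity), mul_assoc,
          mul_inv_cancel₀ (ne_of_gt (Real.rpow_pos_of_pos (by positivity) s)), mul_one]
      calc (∫ v : ℝ, ρ v / (‖(v:ℂ) - β‖) ^ s) ≤ A := hFle β
        _ = (A * (4*R)^s) * (4*R)^(-s) := h2
        _ ≤ B * (‖β‖ + R)^(-s) := by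
            refine mul_le_mul (le_max_left _ _) h1 (by positivity) hBpos.le
    · calc (∫ v : ℝ, ρ v / (‖(v:ℂ) - β‖) ^ s)
          ≤ 2^s * (‖β‖ + R)^(-s) := hFfar β hcase.le
        _ ≤ B * (‖β‖ + R)^(-s) :=
            mul_le_mul_of_nonneg_right (le_max_right _ _) (by positivity)
  -- conclusion
  have hδs : (0:ℝ) < δ^s := Real.rpow_pos_of_pos hδpos s
  refine ⟨2 * B / δ^s, fun η β => ?_⟩
  have hxpos : (0:ℝ) < ‖β‖ + R := by positivity
  have hC0 : (0:ℝ) ≤ 2 * B / δ^s := by positivity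
  calc (∫ v : ℝ, ρ v / (‖(v:ℂ) - β‖) ^ s)
      ≤ B * (‖β‖ + R)^(-s) := hD β
    _ = (2 * B / δ^s) * (δ^s/2 * (‖β‖ + R)^(-s)) := by
        field_simp
    _ ≤ (2 * B / δ^s) * ((∫ v : ℝ, (‖(v:ℂ) - η‖) ^ s * ρ v) *
          (‖β‖ + R)^(-s)) := by
        refine mul_le_mul_of_nonneg_left (mul_le_mul_of_nonneg_right (hHlow η) ?_) hC0
        positivity
    _ ≤ (2 * B / δ^s) * ∫ v : ℝ, (‖(v:ℂ) - η‖) ^ s /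
          (‖(v:ℂ) - β‖) ^ s * ρ v := by
        refine mul_le_mul_of_nonneg_left ?_ hC0
        rw [mul_comm]
        exact hGlow η β
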